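/- In the winning set automaton of the minimal DFA for the language of words with exactly n ones (a chain 0 → 1 → ⋯ → n → n+1 with self-loops labeled 0 on states 0,…,n, transitions labeled 1 going right, state n final, and n+1 a rejecting sink), every game state G is equivalent to its interval closure: replacing each set S ∈ G by the interval {min S, …, max S} yields an equivalent game state. -/

import Mathlib

/-- Left derivative: `lderiv s T = {v | s :: v ∈ T}`. -/
def lderiv (s : Bool) (T : Set (List Bool)) : Set (List Bool) := {v | s :: v ∈ T}

/-- Winning-set membership. Turn orders are lists over `Bool` with
`false` = A (Alice) and `true` = B (Bob), so that `A < B`. -/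
def winW : List Bool → Set (List Bool) → Prop
  | [], T => [] ∈ T
  | (false :: v), T => winW v (lderiv false T) ∨ winW v (lderiv true T)
  | (true :: v), T => winW v (lderiv false T) ∧ winW v (lderiv true T)

/-- The winning set of a binary language. -/
def winningSet (T : Set (List Bool)) : Set (List Bool) := {w | winW w T}

variable {Q : Type*}

/-- `A`-transition of the winning-set NFA: each state of `S` evolves by an
independently chosen letter. -/
def stepA (M : DFA Bool Q) (S : Set Q) : Set (Set Q) :=
  { T | ∃ f : Q → Bool, T = (fun q => M.step q (f q)) '' S }

/-- `B`-transition of the winning-set NFA: all states evolve by both letters. -/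
def stepB (M : DFA Bool Q) (S : Set Q) : Set (Set Q) :=
  { T | T = {p | ∃ q ∈ S, ∃ b : Bool, p = M.step q b} }

/-- Transition function of the determinized winning-set automaton `W(A)`
on game states, with `false` = A and `true` = B. -/
def gsStep (M : DFA Bool Q) (G : Set (Set Q)) (c : Bool) : Set (Set Q) :=
  ⋃ S ∈ G, (if c then stepB M S else stepA M S)

/-- Iterated transition function `δ_W` of `W(A)` on words. -/
def gsRun (M : DFA Bool Q) (G : Set (Set Q)) (w : List Bool) : Set (Set Q) :=
  w.foldl (gsStep M) G

/-- A game state is accepting iff some of its sets consists of final states. -/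
def gsAccept (M : DFA Bool Q) (G : Set (Set Q)) : Prop :=
  ∃ S ∈ G, S ⊆ M.accept

/-- The minimal DFA for the language of binary words with exactly `n` ones:
a chain `0 → 1 → ⋯ → n → n+1` with `0`-self-loops on `0, …, n`, the
`1`-transitions going right, `n` final, and `n+1` a rejecting sink. -/
def chainM (n : ℕ) : DFA Bool (Fin (n + 2)) where
  step q b := if h : b = true ∧ (q : ℕ) < n + 1 then ⟨(q : ℕ) + 1, by omega⟩ else q
  start := ⟨0, by omega⟩
  accept := {⟨n, by omega⟩}

/-! ### Auxiliary lemmas -/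

lemma chain_step_coe (n : ℕ) (q : Fin (n + 2)) (c : Bool) :
    (((chainM n).step q c : Fin (n + 2)) : ℕ) =
      if c = true ∧ (q : ℕ) < n + 1 then (q : ℕ) + 1 else (q : ℕ) := by
  by_cases h : c = true ∧ (q : ℕ) < n + 1
  · simp only [Nat.lt_add_one_iff] at h; simp [chainM, h]
  · simp only [Nat.lt_add_one_iff] at h; simp [chainM, h]

lemma chain_step_ge (n : ℕ) (q : Fin (n + 2)) (c : Bool) :
    (q : ℕ) ≤ ((chainM n).step q c : ℕ) := by
  rw [chain_step_coe]; split_ifs <;> omega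

lemma chain_step_le (n : ℕ) (q : Fin (n + 2)) (c : Bool) :
    ((chainM n).step q c : ℕ) ≤ (q : ℕ) + 1 := by
  rw [chain_step_coe]; split_ifs <;> omega

lemma chain_step_le_top (n : ℕ) (q b : Fin (n + 2)) (c : Bool) (h : q ≤ b) :
    (chainM n).step q c ≤ (chainM n).step b true := by
  rw [Fin.le_def] at *
  rw [chain_step_coe, chain_step_coe]
  have := q.isLt; have := b.isLt
  split_ifs <;> simp_all <;> omega

lemma gsRun_cons (M : DFA Bool Q) (G : Set (Set Q)) (c : Bool) (w : List Bool) :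
    gsRun M G (c :: w) = gsRun M (gsStep M G c) w := rfl

lemma mem_gsStep (M : DFA Bool Q) (G : Set (Set Q)) (c : Bool) (T : Set Q) :
    T ∈ gsStep M G c ↔ ∃ S ∈ G, T ∈ (if c then stepB M S else stepA M S) := by
  simp [gsStep]

/-- Decompose acceptance after a run into single-set runs. -/
lemma gsAccept_run_iff (M : DFA Bool Q) :
    ∀ (w : List Bool) (G : Set (Set Q)),
      gsAccept M (gsRun M G w) ↔ ∃ S ∈ G, gsAccept M (gsRun M {S} w) := by
  intro w
  induction w with
  | nil =>
    intro G
    simp [gsRun, gsAccept]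
  | cons c w ih =>
    intro G
    rw [gsRun_cons, ih]
    constructor
    · rintro ⟨T, hT, hacc⟩
      rw [mem_gsStep] at hT
      obtain ⟨S, hS, hTS⟩ := hT
      refine ⟨S, hS, ?_⟩
      rw [gsRun_cons, ih]
      exact ⟨T, by rw [mem_gsStep]; exact ⟨S, rfl, hTS⟩, hacc⟩
    · rintro ⟨S, hS, hacc⟩
      rw [gsRun_cons, ih] at hacc
      obtain ⟨T, hT, hacc⟩ := hacc
      rw [mem_gsStep] at hT
      obtain ⟨S', hS', hTS⟩ := hT
      rw [Set.mem_singleton_iff] at hS'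
      rw [hS'] at hTS
      exact ⟨T, by rw [mem_gsStep]; exact ⟨S, hS, hTS⟩, hacc⟩

lemma stepB_eq (M : DFA Bool Q) (S : Set Q) :
    stepB M S = {{p | ∃ q ∈ S, ∃ b : Bool, p = M.step q b}} := rfl

lemma TB_least (n : ℕ) {S : Set (Fin (n + 2))} {a : Fin (n + 2)} (ha : IsLeast S a) :
    IsLeast {p | ∃ q ∈ S, ∃ b : Bool, p = (chainM n).step q b} a := by
  constructor
  · refine ⟨a, ha.1, false, ?_⟩
    have : ((chainM n).step a false : ℕ) = (a : ℕ) := by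
      rw [chain_step_coe]; simp
    exact (Fin.ext this.symm)
  · rintro p ⟨q, hq, b, rfl⟩
    have h1 := ha.2 hq
    rw [Fin.le_def] at *
    exact le_trans h1 (chain_step_ge n q b)

lemma TB_greatest (n : ℕ) {S : Set (Fin (n + 2))} {b : Fin (n + 2)} (hb : IsGreatest S b) :
    IsGreatest {p | ∃ q ∈ S, ∃ c : Bool, p = (chainM n).step q c} ((chainM n).step b true) := by
  constructor
  · exact ⟨b, hb.1, true, rfl⟩
  · rintro p ⟨q, hq, c, rfl⟩
    exact chain_step_le_top n q b c (hb.2 hq)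

lemma imgA_least (n : ℕ) {S : Set (Fin (n + 2))} {a : Fin (n + 2)} (ha : IsLeast S a)
    (f : Fin (n + 2) → Bool) :
    IsLeast ((fun q => (chainM n).step q (f q)) '' S) ((chainM n).step a (f a)) := by
  constructor
  · exact ⟨a, ha.1, rfl⟩
  · rintro p ⟨q, hq, rfl⟩
    rcases eq_or_lt_of_le (ha.2 hq) with h | h
    · subst h; exact le_refl _
    · rw [Fin.le_def]
      calc ((chainM n).step a (f a) : ℕ) ≤ (a : ℕ) + 1 := chain_step_le n a (f a)
        _ ≤ (q : ℕ) := h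
        _ ≤ _ := chain_step_ge n q (f q)

lemma imgA_greatest (n : ℕ) {S : Set (Fin (n + 2))} {b : Fin (n + 2)} (hb : IsGreatest S b)
    (f : Fin (n + 2) → Bool) :
    IsGreatest ((fun q => (chainM n).step q (f q)) '' S) ((chainM n).step b (f b)) := by
  constructor
  · exact ⟨b, hb.1, rfl⟩
  · rintro p ⟨q, hq, rfl⟩
    rcases eq_or_lt_of_le (hb.2 hq) with h | h
    · subst h; exact le_refl _
    · rw [Fin.le_def]
      calc ((chainM n).step q (f q) : ℕ) ≤ (q : ℕ) + 1 := chain_step_le n q (f q)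
        _ ≤ (b : ℕ) := h
        _ ≤ _ := chain_step_ge n b (f b)

/-- Key lemma: acceptance from a single set only depends on its min and max. -/
lemma key (n : ℕ) :
    ∀ (w : List Bool) (S : Set (Fin (n + 2))) (a b : Fin (n + 2)),
      IsLeast S a → IsGreatest S b →
      (gsAccept (chainM n) (gsRun (chainM n) {S} w) ↔
        gsAccept (chainM n) (gsRun (chainM n) {Set.Icc a b} w)) := by
  intro w
  induction w with
  | nil =>
    intro S a b ha hb
    have hab : a ≤ b := ha.2 hb.1
    simp only [gsRun, List.foldl_nil, gsAccept, Set.mem_singleton_iff, exists_eq_left]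
    constructor
    · intro h
      have hAa : a = ⟨n, by omega⟩ := h ha.1
      have hBb : b = ⟨n, by omega⟩ := h hb.1
      intro x hx
      rw [Set.mem_Icc] at hx
      have : x = (⟨n, by omega⟩ : Fin (n + 2)) := le_antisymm (hBb ▸ hx.2) (hAa ▸ hx.1)
      simp [chainM, this]
    · intro h x hx
      exact h ⟨ha.2 hx, hb.2 hx⟩
  | cons c w ih =>
    intro S a b ha hb
    have hab : a ≤ b := ha.2 hb.1
    have haI : IsLeast (Set.Icc a b) a := ⟨Set.mem_Icc.2 ⟨le_refl a, hab⟩, fun x hx => (Set.mem_Icc.1 hx).1⟩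
    have hbI : IsGreatest (Set.Icc a b) b := ⟨Set.mem_Icc.2 ⟨hab, le_refl b⟩, fun x hx => (Set.mem_Icc.1 hx).2⟩
    rw [gsRun_cons, gsRun_cons, gsAccept_run_iff, gsAccept_run_iff]
    cases c with
    | true =>
      simp only [gsStep, Set.mem_singleton_iff, Set.iUnion_iUnion_eq_left, if_true,
        stepB_eq, exists_eq_left]
      rw [ih _ _ _ (TB_least n ha) (TB_greatest n hb),
        ih _ _ _ (TB_least n haI) (TB_greatest n hbI)]
    | false =>
      simp only [gsStep, Set.mem_singleton_iff, Set.iUnion_iUnion_eq_left, if_false,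
        stepA, Set.mem_setOf_eq]
      constructor
      · rintro ⟨T, ⟨f, rfl⟩, hacc⟩
        refine ⟨(fun q => (chainM n).step q (f q)) '' Set.Icc a b, ⟨f, rfl⟩, ?_⟩
        rw [ih _ _ _ (imgA_least n haI f) (imgA_greatest n hbI f)]
        rw [ih _ _ _ (imgA_least n ha f) (imgA_greatest n hb f)] at hacc
        exact hacc
      · rintro ⟨T, ⟨f, rfl⟩, hacc⟩
        refine ⟨(fun q => (chainM n).step q (f q)) '' S, ⟨f, rfl⟩, ?_⟩
        rw [ih _ _ _ (imgA_least n ha f) (imgA_greatest n hb f)]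
        rw [ih _ _ _ (imgA_least n haI f) (imgA_greatest n hbI f)] at hacc
        exact hacc

/-- in the winning set automaton of `chainM n`, every game state
is equivalent to its interval closure. -/
theorem gs_interval_closure (n : ℕ) (G : Set (Set (Fin (n + 2))))
    (hG : ∀ S ∈ G, S.Nonempty) :
    ∀ w : List Bool,
      gsAccept (chainM n) (gsRun (chainM n) G w) ↔
        gsAccept (chainM n) (gsRun (chainM n)
          {T | ∃ S ∈ G, ∃ a b : Fin (n + 2),
            IsLeast S a ∧ IsGreatest S b ∧ T = Set.Icc a b} w) := by
  intro w
  rw [gsAccept_run_iff, gsAccept_run_iff]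
  constructor
  · rintro ⟨S, hS, hacc⟩
    obtain ⟨a, haS, hamin⟩ := Set.exists_min_image S id S.toFinite (hG S hS)
    obtain ⟨b, hbS, hbmax⟩ := Set.exists_max_image S id S.toFinite (hG S hS)
    have ha : IsLeast S a := ⟨haS, fun x hx => hamin x hx⟩
    have hb : IsGreatest S b := ⟨hbS, fun x hx => hbmax x hx⟩
    exact ⟨Set.Icc a b, ⟨S, hS, a, b, ha, hb, rfl⟩, (key n w S a b ha hb).1 hacc⟩
  · rintro ⟨T, ⟨S, hS, a, b, ha, hb, rfl⟩, hacc⟩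
    exact ⟨S, hS, (key n w S a b ha hb).2 hacc⟩
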